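/- ∑_{n=0}^∞ (1/(4n+1)) · ((1/2)_n / n!) = π^(3/2) / (2√2 · Γ(3/4)²), where (1/2)_n is the Pochhammer symbol. -/

import Mathlib

open scoped Real

noncomputable def poch (x : ℝ) (n : ℕ) : ℝ := ∏ k ∈ Finset.range n, (x + k)

noncomputable def rc (n : ℕ) : ℝ := poch (1/2) n / (n.factorial : ℝ)

lemma rc_zero : rc 0 = 1 := by simp [rc, poch]

lemma rc_succ (n : ℕ) : ((n : ℝ) + 1) * rc (n + 1) = ((n : ℝ) + 1/2) * rc n := by
  have h : poch (1/2) (n+1) = poch (1/2) n * (1/2 + n) := Finset.prod_range_succ _ _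
  have hfac : ((n+1).factorial : ℝ) = ((n:ℝ)+1) * (n.factorial : ℝ) := by
    rw [Nat.factorial_succ]; push_cast; ring
  have h0 : ((n:ℝ)+1) ≠ 0 := by positivity
  have h1 : (n.factorial : ℝ) ≠ 0 := by positivity
  unfold rc; rw [h, hfac]; field_simp
  ring

lemma rc_nonneg (n : ℕ) : 0 ≤ rc n := by
  have h : 0 ≤ poch (1/2) n := Finset.prod_nonneg (fun k _ => by positivity)
  exact div_nonneg h (Nat.cast_nonneg _)

lemma rc_le_one (n : ℕ) : rc n ≤ 1 := by
  induction n with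
  | zero => simp [rc_zero]
  | succ n ih =>
    have h := rc_succ n
    nlinarith [rc_nonneg n, rc_nonneg (n+1)]

lemma rc_le_inv_sqrt (n : ℕ) : rc n ≤ 1 / Real.sqrt ((n:ℝ) + 1) := by
  induction n with
  | zero => simp [rc_zero]
  | succ n ih =>
    have h := rc_succ n
    have h0 : (0:ℝ) < (n:ℝ) + 1 := by positivity
    have hs1 : (0:ℝ) < Real.sqrt ((n:ℝ) + 1) := Real.sqrt_pos.2 h0
    have hs2 : (0:ℝ) < Real.sqrt ((n:ℝ) + 2) := Real.sqrt_pos.2 (by positivity)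
    have e1 : Real.sqrt ((n:ℝ)+2) ^ 2 = (n:ℝ)+2 := Real.sq_sqrt (by positivity)
    have e2 : Real.sqrt ((n:ℝ)+1) ^ 2 = (n:ℝ)+1 := Real.sq_sqrt (by positivity)
    have key : ((n:ℝ) + 1/2) * Real.sqrt ((n:ℝ)+2) ≤ ((n:ℝ)+1) * Real.sqrt ((n:ℝ)+1) := by
      have h2 : (((n:ℝ) + 1/2) * Real.sqrt ((n:ℝ)+2))^2 ≤ (((n:ℝ)+1) * Real.sqrt ((n:ℝ)+1))^2 := by
        rw [mul_pow, mul_pow, e1, e2]; nlinarith [sq_nonneg ((n:ℝ))]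
      exact (pow_le_pow_iff_left₀ (by positivity) (by positivity) two_ne_zero).mp h2
    have hrc : rc (n+1) = ((n:ℝ) + 1/2) * rc n / ((n:ℝ)+1) := by
      field_simp at h ⊢; linarith
    have hc2 : ((n+1:ℕ):ℝ) + 1 = (n:ℝ)+2 := by push_cast; ring
    rw [hc2, hrc, div_le_div_iff₀ h0 hs2]
    have hinv : Real.sqrt ((n:ℝ)+1) * (1/Real.sqrt ((n:ℝ)+1)) = 1 := by
      field_simp
    nlinarith [mul_le_mul_of_nonneg_right key (rc_nonneg n),
      mul_le_mul_of_nonneg_left ih (mul_pos h0 hs1).le, rc_nonneg n, hs1, hs2]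



open scoped Real

lemma binom_series {x : ℝ} (hx0 : 0 ≤ x) (hx1 : x < 1) :
    HasSum (fun n => rc n * x ^ n) ((1 - x) ^ (-((1:ℝ)/2))) := by
  set r : ℝ := (1 + x) / 2 with hr
  have hr0 : 0 < r := by positivity
  have hr1 : r < 1 := by rw [hr]; linarith
  have hxr : x < r := by rw [hr]; linarith
  set t : Set ℝ := Set.Ioo (-r) r with ht
  have ht_open : IsOpen t := isOpen_Ioo
  have ht_conn : IsPreconnected t := isPreconnected_Ioo
  have h0t : (0:ℝ) ∈ t := ⟨by linarith, hr0⟩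
  have hxt : x ∈ t := ⟨by linarith, hxr⟩
  set g : ℕ → ℝ → ℝ := fun n y => rc n * y ^ n with hg_def
  set g' : ℕ → ℝ → ℝ := fun n y => rc n * (n * y ^ (n - 1)) with hg'_def
  set u : ℕ → ℝ := fun n => (1/r) * ((n:ℝ) * r ^ n) with hu_def
  have hu : Summable u := by
    have := summable_pow_mul_geometric_of_norm_lt_one (R := ℝ) 1 (by
      rw [Real.norm_eq_abs, abs_of_pos hr0]; exact hr1)
    simpa [hu_def, pow_one] using this.mul_left (1/r)
  have hg : ∀ n y, y ∈ t → HasDerivAt (g n) (g' n y) y := fun n y _ =>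
    (hasDerivAt_pow n y).const_mul (rc n)
  have hbound : ∀ n y, y ∈ t → ‖g' n y‖ ≤ u n := by
    intro n y hy
    have hya : |y| ≤ r := by
      rw [abs_le]; exact ⟨hy.1.le, hy.2.le⟩
    match n with
    | 0 => simp [hg'_def, hu_def]
    | (m+1) =>
      have h1 : |y| ^ m ≤ r ^ m := pow_le_pow_left₀ (abs_nonneg y) hya m
      have e : u (m+1) = ((m:ℝ)+1) * r ^ m := by
        rw [hu_def]; field_simp; push_cast; ring
      rw [e]
      calc ‖g' (m+1) y‖ = rc (m+1) * (((m:ℝ)+1) * |y| ^ m) := by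
            rw [hg'_def]
            simp only [Nat.add_sub_cancel, Real.norm_eq_abs, abs_mul,
              abs_of_nonneg (rc_nonneg _), abs_pow]
            rw [abs_of_nonneg (by positivity : (0:ℝ) ≤ ((m+1:ℕ):ℝ))]
            push_cast; ring
        _ ≤ 1 * (((m:ℝ)+1) * r ^ m) := by
            apply mul_le_mul (rc_le_one _) ?_ (by positivity) one_pos.le
            have h2 : (0:ℝ) ≤ (m:ℝ)+1 := by positivity
            nlinarith [pow_nonneg (abs_nonneg y) m]
        _ = ((m:ℝ)+1) * r ^ m := one_mul _
  have hg0 : Summable (fun n => g n 0) := by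
    apply summable_of_ne_finset_zero (s := {0})
    intro n hn
    have : n ≠ 0 := by simpa using hn
    simp [hg_def, zero_pow this]
  have hSg : ∀ y, y ∈ t → Summable (fun n => rc n * y ^ n) := by
    intro y hy
    apply Summable.of_norm_bounded (summable_geometric_of_lt_one hr0.le hr1)
    intro n
    have hya : |y| ≤ r := by rw [abs_le]; exact ⟨hy.1.le, hy.2.le⟩
    calc ‖rc n * y ^ n‖ = rc n * |y| ^ n := by
          rw [Real.norm_eq_abs, abs_mul, abs_of_nonneg (rc_nonneg _), abs_pow]
      _ ≤ 1 * r ^ n := mul_le_mul (rc_le_one _) (pow_le_pow_left₀ (abs_nonneg y) hya n)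
          (by positivity) one_pos.le
      _ = r ^ n := one_mul _
  set F : ℝ → ℝ := fun z => ∑' n, rc n * z ^ n with hF_def
  set D : ℝ → ℝ := fun y => ∑' n, g' n y with hD_def
  have hF : ∀ y, y ∈ t → HasDerivAt F (D y) y := fun y hy =>
    hasDerivAt_tsum_of_isPreconnected hu ht_open ht_conn hg hbound h0t hg0 hy
  have hkey : ∀ y, y ∈ t → (1 - y) * D y = (1/2) * F y := by
    intro y hy
    have hya : |y| ≤ r := by rw [abs_le]; exact ⟨hy.1.le, hy.2.le⟩
    have hsum : Summable (fun n => g' n y) :=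
      Summable.of_norm_bounded hu (fun n => hbound n y hy)
    have hA : Summable (fun n => g' (n+1) y) := (summable_nat_add_iff 1).mpr hsum
    have hB : Summable (fun n => rc n * ((n:ℝ) * y ^ n)) := by
      apply Summable.of_norm_bounded (hu.mul_left r)
      intro n
      calc ‖rc n * ((n:ℝ) * y ^ n)‖ = rc n * ((n:ℝ) * |y| ^ n) := by
            rw [Real.norm_eq_abs, abs_mul, abs_of_nonneg (rc_nonneg _), abs_mul, abs_pow,
              abs_of_nonneg (Nat.cast_nonneg n)]
        _ ≤ 1 * ((n:ℝ) * r ^ n) := mul_le_mul (rc_le_one _)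
            (by
              have h3 := pow_le_pow_left₀ (abs_nonneg y) hya n
              nlinarith [Nat.cast_nonneg (α := ℝ) n, pow_nonneg (abs_nonneg y) n])
            (by positivity) one_pos.le
        _ = r * (u n) := by rw [hu_def]; field_simp
    have e1 : D y = ∑' n, g' (n+1) y := by
      show (∑' n, g' n y) = _
      rw [Summable.tsum_eq_zero_add hsum]
      simp [hg'_def]
    have e2 : y * D y = ∑' n, rc n * ((n:ℝ) * y ^ n) := by
      rw [e1, ← tsum_mul_left]
      rw [Summable.tsum_eq_zero_add hB]
      simp only [Nat.cast_zero, zero_mul, mul_zero, zero_add]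
      apply tsum_congr
      intro n
      simp only [hg'_def, Nat.add_sub_cancel, pow_succ]
      push_cast; ring
    have e3 : ∀ n, g' (n+1) y - rc n * ((n:ℝ) * y ^ n) = (1/2) * (rc n * y ^ n) := by
      intro n
      have h := rc_succ n
      simp only [hg'_def, Nat.add_sub_cancel]
      push_cast
      linear_combination (y ^ n) * h
    calc (1 - y) * D y = (∑' n, g' (n+1) y) - ∑' n, rc n * ((n:ℝ) * y ^ n) := by
          rw [sub_mul, one_mul, e2, ← e1]
      _ = ∑' n, (g' (n+1) y - rc n * ((n:ℝ) * y ^ n)) := (Summable.tsum_sub hA hB).symm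
      _ = ∑' n, (1/2) * (rc n * y ^ n) := tsum_congr e3
      _ = (1/2) * F y := tsum_mul_left
  set G : ℝ → ℝ := fun y => (1 - y) ^ ((1:ℝ)/2) * F y with hG_def
  have hG : ∀ y ∈ t, HasDerivAt G 0 y := by
    intro y hy
    have h1y : 0 < 1 - y := by
      have := hy.2
      have : y < r := this
      linarith
    have hp0 : HasDerivAt (fun z : ℝ => (1 - z) ^ ((1:ℝ)/2))
        (-((1/2) * (1 - y) ^ (-((1:ℝ)/2)))) y := by
      have hc : HasDerivAt (fun z : ℝ => 1 - z) (-1) y := (hasDerivAt_id y).const_sub 1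
      have hr' : HasDerivAt (fun u : ℝ => u ^ ((1:ℝ)/2))
          ((1/2) * (1 - y) ^ ((1:ℝ)/2 - 1)) (1 - y) :=
        Real.hasDerivAt_rpow_const (Or.inl h1y.ne')
      have hcomp := hr'.comp y hc
      refine hcomp.congr_deriv ?_
      rw [show ((1:ℝ)/2 - 1) = -((1:ℝ)/2) by norm_num]
      ring
    have hprod := hp0.mul (hF y hy)
    have hval : -((1/2) * (1 - y) ^ (-((1:ℝ)/2))) * F y + (1 - y) ^ ((1:ℝ)/2) * D y = 0 := by
      have hsplit : (1 - y) ^ ((1:ℝ)/2) = (1 - y) ^ (-((1:ℝ)/2)) * (1 - y) := by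
        rw [← Real.rpow_add_one h1y.ne']
        norm_num
      rw [hsplit]
      have hk := hkey y hy
      linear_combination ((1 - y) ^ (-((1:ℝ)/2))) * hk
    rw [← hval]
    exact hprod
  have hconst : G x = G 0 := by
    have hconv : Convex ℝ t := convex_Ioo _ _
    have hb := hconv.norm_image_sub_le_of_norm_hasDerivWithin_le
      (f' := fun _ => (0:ℝ)) (fun y hy => (hG y hy).hasDerivWithinAt)
      (C := 0) (fun y hy => by simp) h0t hxt
    simp only [Real.norm_eq_abs, zero_mul] at hb
    have h2 := abs_nonneg (G x - G 0)
    have h3 : |G x - G 0| = 0 := le_antisymm hb h2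
    have := abs_eq_zero.mp h3
    linarith [this]
  have hG0 : G 0 = 1 := by
    have hF0 : F 0 = 1 := by
      rw [show F 0 = ∑' n, rc n * (0:ℝ) ^ n from rfl]
      rw [tsum_eq_single 0 (fun n hn => by simp [zero_pow hn])]
      simp [rc_zero]
    simp [hG_def, hF0]
  have hFx : F x = (1 - x) ^ (-((1:ℝ)/2)) := by
    have h1x : 0 < 1 - x := by linarith
    have heq : (1 - x) ^ ((1:ℝ)/2) * F x = 1 := by
      rw [show (1 - x) ^ ((1:ℝ)/2) * F x = G x from rfl, hconst, hG0]
    have hne : (1 - x) ^ ((1:ℝ)/2) ≠ 0 := by positivity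
    have hmul : (1 - x) ^ ((1:ℝ)/2) * (1 - x) ^ (-((1:ℝ)/2)) = 1 := by
      rw [← Real.rpow_add h1x]; norm_num
    calc F x = ((1 - x) ^ ((1:ℝ)/2) * (1 - x) ^ (-((1:ℝ)/2))) * F x := by
          rw [hmul, one_mul]
      _ = ((1 - x) ^ ((1:ℝ)/2) * F x) * (1 - x) ^ (-((1:ℝ)/2)) := by ring
      _ = 1 * (1 - x) ^ (-((1:ℝ)/2)) := by rw [heq]
      _ = (1 - x) ^ (-((1:ℝ)/2)) := one_mul _
  have hs := (hSg x hxt).hasSum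
  rwa [show ∑' n, rc n * x ^ n = F x from rfl, hFx] at hs


open scoped Real
open MeasureTheory intervalIntegral

noncomputable def Fn (n : ℕ) (u : ℝ) : ℝ := rc n * u ^ ((n : ℝ) - 3/4)

lemma Fn_integrableOn (n : ℕ) : IntegrableOn (Fn n) (Set.Ioo (0:ℝ) 1) volume := by
  have h : IntervalIntegrable (fun x : ℝ => x ^ ((n : ℝ) - 3/4)) volume 0 1 :=
    intervalIntegrable_rpow' (by
      have : (0:ℝ) ≤ (n:ℝ) := Nat.cast_nonneg n
      linarith)
  have h2 : IntegrableOn (fun x : ℝ => x ^ ((n : ℝ) - 3/4)) (Set.Ioc (0:ℝ) 1) volume := by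
    rw [intervalIntegrable_iff] at h
    simpa [Set.uIoc_of_le (zero_le_one (α := ℝ))] using h
  exact ((h2.mono_set Set.Ioo_subset_Ioc_self).const_mul (rc n) : _)

lemma Fn_integral (n : ℕ) : ∫ u in Set.Ioo (0:ℝ) 1, Fn n u = rc n / ((n:ℝ) + 1/4) := by
  have hpos : (0:ℝ) < (n:ℝ) + 1/4 := by positivity
  rw [← integral_Ioc_eq_integral_Ioo, ← intervalIntegral.integral_of_le (zero_le_one (α := ℝ))]
  unfold Fn
  rw [intervalIntegral.integral_const_mul]
  rw [integral_rpow (Or.inl (by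
    have : (0:ℝ) ≤ (n:ℝ) := Nat.cast_nonneg n
    linarith))]
  have hne : (n:ℝ) - 3/4 + 1 ≠ 0 := by
    have : (0:ℝ) ≤ (n:ℝ) := Nat.cast_nonneg n
    intro hcon
    linarith
  rw [Real.one_rpow, Real.zero_rpow hne]
  have : (n:ℝ) - 3/4 + 1 = (n:ℝ) + 1/4 := by ring
  rw [this]
  ring

lemma Fn_norm_integral (n : ℕ) :
    ∫ u in Set.Ioo (0:ℝ) 1, ‖Fn n u‖ = rc n / ((n:ℝ) + 1/4) := by
  rw [← Fn_integral n]
  apply MeasureTheory.integral_congr_ae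
  filter_upwards [ae_restrict_mem measurableSet_Ioo] with u hu
  have h1 : 0 ≤ Fn n u :=
    mul_nonneg (rc_nonneg n) (Real.rpow_nonneg hu.1.le _)
  rw [Real.norm_eq_abs, abs_of_nonneg h1]

lemma summable_Fn_norm : Summable (fun n => ∫ u in Set.Ioo (0:ℝ) 1, ‖Fn n u‖) := by
  simp only [Fn_norm_integral]
  have hs : Summable (fun n : ℕ => 4 * ((((n+1:ℕ)):ℝ) ^ ((3:ℝ)/2))⁻¹) := by
    apply Summable.mul_left
    exact (summable_nat_add_iff 1).mpr (Real.summable_nat_rpow_inv.mpr (by norm_num))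
  apply Summable.of_nonneg_of_le ?_ ?_ hs
  · intro n
    exact div_nonneg (rc_nonneg n) (by positivity)
  · intro n
    have hc := rc_le_inv_sqrt n
    have h1 : (0:ℝ) < (n:ℝ) + 1 := by positivity
    have hs1 : (0:ℝ) < Real.sqrt ((n:ℝ)+1) := Real.sqrt_pos.2 h1
    have hrpow : (((n+1:ℕ)):ℝ) ^ ((3:ℝ)/2) = ((n:ℝ)+1) * Real.sqrt ((n:ℝ)+1) := by
      have hcast : (((n+1:ℕ)):ℝ) = (n:ℝ) + 1 := by push_cast; ring
      rw [hcast, show ((3:ℝ)/2) = 1 + (1:ℝ)/2 by norm_num, Real.rpow_add h1,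
        Real.rpow_one, Real.sqrt_eq_rpow]
    rw [hrpow]
    have hq : (0:ℝ) < (n:ℝ) + 1/4 := by positivity
    rw [div_le_iff₀ hq, mul_comm]
    have he2 : Real.sqrt ((n:ℝ)+1) * Real.sqrt ((n:ℝ)+1) = (n:ℝ)+1 :=
      Real.mul_self_sqrt h1.le
    have hb : rc n * Real.sqrt ((n:ℝ)+1) ≤ 1 := by
      have := mul_le_mul_of_nonneg_right hc hs1.le
      calc rc n * Real.sqrt ((n:ℝ)+1) ≤ 1 / Real.sqrt ((n:ℝ)+1) * Real.sqrt ((n:ℝ)+1) := this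
        _ = 1 := by field_simp
    have hinvpos : (0:ℝ) < (((n:ℝ)+1) * Real.sqrt ((n:ℝ)+1))⁻¹ := by positivity
    have hid : 1 / Real.sqrt ((n:ℝ)+1) = ((n:ℝ)+1) * (((n:ℝ)+1) * Real.sqrt ((n:ℝ)+1))⁻¹ := by
      rw [mul_inv]
      field_simp
    nlinarith [hc.trans_eq hid, mul_nonneg hinvpos.le (Nat.cast_nonneg (α := ℝ) n)]

theorem ramanujan_sum_aux :
    HasSum (fun n : ℕ => rc n / ((n:ℝ) + 1/4))
      (∫ u in Set.Ioo (0:ℝ) 1, u ^ (-(3/4:ℝ)) * (1-u) ^ (-((1:ℝ)/2))) := by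
  have h := MeasureTheory.hasSum_integral_of_summable_integral_norm
    (F := Fn) (μ := volume.restrict (Set.Ioo (0:ℝ) 1))
    (fun n => Fn_integrableOn n) summable_Fn_norm
  have heq1 : (fun n => ∫ u in Set.Ioo (0:ℝ) 1, Fn n u) = fun n => rc n / ((n:ℝ) + 1/4) :=
    funext Fn_integral
  rw [heq1] at h
  have heq2 : (∫ u in Set.Ioo (0:ℝ) 1, ∑' n, Fn n u)
      = ∫ u in Set.Ioo (0:ℝ) 1, u ^ (-(3/4:ℝ)) * (1-u) ^ (-((1:ℝ)/2)) := by
    apply MeasureTheory.integral_congr_ae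
    filter_upwards [ae_restrict_mem measurableSet_Ioo] with u hu
    have hu0 : 0 < u := hu.1
    have hu1 : u < 1 := hu.2
    have hterm : ∀ n : ℕ, Fn n u = (rc n * u ^ n) * u ^ (-(3/4:ℝ)) := by
      intro n
      unfold Fn
      rw [show (n:ℝ) - 3/4 = (n:ℝ) + (-(3/4:ℝ)) by ring, Real.rpow_add hu0,
        Real.rpow_natCast]
      ring
    calc (∑' n, Fn n u) = ∑' n, (rc n * u ^ n) * u ^ (-(3/4:ℝ)) := tsum_congr hterm
      _ = (∑' n, rc n * u ^ n) * u ^ (-(3/4:ℝ)) := tsum_mul_right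
      _ = (1-u) ^ (-((1:ℝ)/2)) * u ^ (-(3/4:ℝ)) := by
          rw [(binom_series hu0.le hu1).tsum_eq]
      _ = u ^ (-(3/4:ℝ)) * (1-u) ^ (-((1:ℝ)/2)) := mul_comm _ _
  rw [heq2] at h
  exact h


open scoped Real
open MeasureTheory intervalIntegral

lemma beta_value :
    (∫ u in Set.Ioo (0:ℝ) 1, u ^ (-(3/4:ℝ)) * (1-u) ^ (-((1:ℝ)/2)))
      = Real.Gamma (1/4) * Real.Gamma (1/2) / Real.Gamma (3/4) := by
  set I : ℝ := ∫ u in Set.Ioo (0:ℝ) 1, u ^ (-(3/4:ℝ)) * (1-u) ^ (-((1:ℝ)/2)) with hI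
  have hIeq : I = ∫ u in (0:ℝ)..1, u ^ (-(3/4:ℝ)) * (1-u) ^ (-((1:ℝ)/2)) := by
    rw [hI, intervalIntegral.integral_of_le (zero_le_one (α := ℝ)),
      integral_Ioc_eq_integral_Ioo]
  have hbeta : Complex.betaIntegral (1/4) (1/2) = (I : ℂ) := by
    rw [Complex.betaIntegral]
    have hcong : ∀ x ∈ Set.uIcc (0:ℝ) 1,
        (x : ℂ) ^ ((1:ℂ)/4 - 1) * (1 - (x:ℂ)) ^ ((1:ℂ)/2 - 1)
          = ((x ^ (-(3/4:ℝ)) * (1-x) ^ (-((1:ℝ)/2)) : ℝ) : ℂ) := by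
      intro x hx
      rw [Set.uIcc_of_le (zero_le_one (α := ℝ))] at hx
      have hx0 : (0:ℝ) ≤ x := hx.1
      have hx1 : (0:ℝ) ≤ 1 - x := by linarith [hx.2]
      rw [Complex.ofReal_mul, Complex.ofReal_cpow hx0, Complex.ofReal_cpow hx1]
      push_cast
      norm_num
    rw [intervalIntegral.integral_congr hcong, intervalIntegral.integral_ofReal, ← hIeq]
  have hgamma := Complex.Gamma_mul_Gamma_eq_betaIntegral
    (s := 1/4) (t := 1/2) (by norm_num) (by norm_num)
  rw [hbeta] at hgamma
  have h34 : (1:ℂ)/4 + 1/2 = ((3/4 : ℝ) : ℂ) := by push_cast; norm_num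
  have h14 : (1:ℂ)/4 = ((1/4 : ℝ) : ℂ) := by push_cast; norm_num
  have h12 : (1:ℂ)/2 = ((1/2 : ℝ) : ℂ) := by push_cast; norm_num
  rw [h34, h14, h12, Complex.Gamma_ofReal, Complex.Gamma_ofReal, Complex.Gamma_ofReal] at hgamma
  have hreal : Real.Gamma (1/4) * Real.Gamma (1/2) = Real.Gamma (3/4) * I := by
    have := hgamma
    rw [← Complex.ofReal_mul, ← Complex.ofReal_mul] at this
    exact_mod_cast this
  have hg34 : (0:ℝ) < Real.Gamma (3/4) := Real.Gamma_pos_of_pos (by norm_num)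
  field_simp
  linarith [hreal]

theorem ramanujan_sum_three :
    HasSum (fun n : ℕ => (1 / (4 * (n : ℝ) + 1)) * (poch (1/2) n / (n.factorial : ℝ)))
      (π ^ ((3 : ℝ) / 2) / (2 * Real.sqrt 2 * Real.Gamma (3/4) ^ 2)) := by
  have h := ramanujan_sum_aux
  rw [beta_value] at h
  have h2 := h.mul_left (1/4)
  have hfun : (fun n : ℕ => 1/4 * (rc n / ((n:ℝ) + 1/4)))
      = fun n : ℕ => (1 / (4 * (n : ℝ) + 1)) * (poch (1/2) n / (n.factorial : ℝ)) := by
    funext n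
    have hn4 : (0:ℝ) < 4 * (n:ℝ) + 1 := by positivity
    have hn4' : (0:ℝ) < (n:ℝ) + 1/4 := by positivity
    show 1/4 * (rc n / ((n:ℝ) + 1/4)) = 1 / (4 * (n:ℝ) + 1) * rc n
    field_simp
  rw [hfun] at h2
  refine cast (congrArg (HasSum _) (Eq.symm ?_)) h2
  -- value equality
  have hg34 : (0:ℝ) < Real.Gamma (3/4) := Real.Gamma_pos_of_pos (by norm_num)
  have hs2 : (0:ℝ) < Real.sqrt 2 := Real.sqrt_pos.2 (by norm_num)
  have hsp : (0:ℝ) < Real.sqrt π := Real.sqrt_pos.2 Real.pi_pos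
  have h12 : Real.Gamma (1/2) = Real.sqrt π := Real.Gamma_one_half_eq
  have hrefl : Real.Gamma (1/4) * Real.Gamma (3/4) = 2 * π / Real.sqrt 2 := by
    have := Real.Gamma_mul_Gamma_one_sub (1/4)
    rw [show (1:ℝ) - 1/4 = 3/4 by norm_num] at this
    rw [this, show π * (1/4) = π/4 by ring, Real.sin_pi_div_four]
    rw [div_div_eq_mul_div]
    ring
  have h32 : π ^ ((3:ℝ)/2) = π * Real.sqrt π := by
    rw [show ((3:ℝ)/2) = 1 + (1:ℝ)/2 by norm_num, Real.rpow_add Real.pi_pos,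
      Real.rpow_one, Real.sqrt_eq_rpow]
  rw [h32, h12]
  have h2' : Real.sqrt 2 * Real.sqrt 2 = 2 := Real.mul_self_sqrt (by norm_num)
  have hrefl2 : Real.sqrt 2 * (Real.Gamma (1/4) * Real.Gamma (3/4)) = 2 * π := by
    rw [hrefl]
    field_simp
  field_simp
  linear_combination (-2) * hrefl2
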